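/- Let (X,B,μ) be a probability space, T an invertible ergodic measure-preserving transformation, and f ∈ L¹(μ). Suppose there is a sequence (g_n) of functions in L²(μ) such that Σ_{n=1}^∞ ‖f - (g_n - g_n∘T)‖₁ < ∞ and Σ_{n=1}^∞ ‖g_n‖₂²/n² < ∞. Then for every δ > 0, Σ_{n=1}^∞ μ{x : |A_n^T f(x)| ≥ δ} < ∞ where A_n^T f = (1/n) Σ_{k=1}^n f∘T^k; consequently, for every sequence of integers (v_n) and every strictly increasing sequence of positive integers (L_n), the moving averages M(v_n,L_n)^T f converge to 0 μ-almost everywhere. -/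

import Mathlib

open MeasureTheory Filter
open scoped ENNReal

/-- Moving average `M(v,L)^T f (x) = (1/L) ∑_{i=v+1}^{v+L} f(T^i x)`. -/
noncomputable def movAvg {X : Type*} (T : Equiv.Perm X) (f : X → ℝ) (v : ℤ) (L : ℕ)
    (x : X) : ℝ :=
  (L : ℝ)⁻¹ * ∑ i ∈ Finset.range L, f ((T ^ (v + 1 + (i : ℤ))) x)

lemma perm_zpow_add_apply {X : Type*} (T : Equiv.Perm X) (a b : ℤ) (x : X) :
    (T ^ a) ((T ^ b) x) = (T ^ (a + b)) x := by
  rw [← Equiv.Perm.mul_apply, ← zpow_add]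

lemma perm_apply_zpow {X : Type*} (T : Equiv.Perm X) (b : ℤ) (x : X) :
    T ((T ^ b) x) = (T ^ (b + 1)) x := by
  have h := perm_zpow_add_apply T 1 b x
  rw [zpow_one] at h
  rw [h, add_comm]

section infra
variable {X : Type*} [MeasurableSpace X] {μ : MeasureTheory.Measure X} (T : Equiv.Perm X)


lemma measurable_perm_zpow (hT : Measurable (⇑T)) (hT' : Measurable (⇑T.symm)) :
    ∀ k : ℤ, Measurable (⇑(T ^ k)) := by
  intro k
  induction k using Int.induction_on with
  | zero => simpa using measurable_id
  | succ n ih =>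
      have h : ⇑(T ^ ((n : ℤ) + 1)) = ⇑T ∘ ⇑(T ^ (n : ℤ)) := by
        funext x
        simp only [Function.comp_apply]; rw [perm_apply_zpow]
      rw [h]; exact hT.comp ih
  | pred n ih =>
      have h : ⇑(T ^ (-(n : ℤ) - 1)) = ⇑T.symm ∘ ⇑(T ^ (-(n : ℤ))) := by
        funext x
        apply T.injective
        simp only [Function.comp_apply, Equiv.apply_symm_apply]
        rw [perm_apply_zpow, sub_add_cancel]
      rw [h]; exact hT'.comp ih

lemma measurePreserving_perm_zpow (hT : Measurable (⇑T)) (hT' : Measurable (⇑T.symm))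
    (hP : MeasurePreserving (⇑T) μ μ) : ∀ k : ℤ, MeasurePreserving (⇑(T ^ k)) μ μ := by
  have e : X ≃ᵐ X := ⟨(T : Equiv.Perm X), hT, hT'⟩
  have hPsymm : MeasurePreserving (⇑T.symm) μ μ := by
    exact MeasurePreserving.symm (⟨(T : Equiv.Perm X), hT, hT'⟩ : X ≃ᵐ X) hP
  intro k
  induction k using Int.induction_on with
  | zero => simpa using MeasurePreserving.id μ
  | succ n ih =>
      have h : ⇑(T ^ ((n : ℤ) + 1)) = ⇑T ∘ ⇑(T ^ (n : ℤ)) := by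
        funext x; simp only [Function.comp_apply]; rw [perm_apply_zpow]
      rw [h]; exact hP.comp ih
  | pred n ih =>
      have h : ⇑(T ^ (-(n : ℤ) - 1)) = ⇑T.symm ∘ ⇑(T ^ (-(n : ℤ))) := by
        funext x
        apply T.injective
        simp only [Function.comp_apply, Equiv.apply_symm_apply]
        rw [perm_apply_zpow, sub_add_cancel]
      rw [h]; exact hPsymm.comp ih

lemma measurableEmbedding_perm_zpow (hT : Measurable (⇑T)) (hT' : Measurable (⇑T.symm))
    (k : ℤ) : MeasurableEmbedding (⇑(T ^ k)) := by
  have h2 : Measurable (⇑(T ^ k).symm) := by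
    have : (T ^ (-k) : Equiv.Perm X) = (T ^ k).symm := by
      rw [zpow_neg]; rfl
    rw [← this]
    exact measurable_perm_zpow T hT hT' (-k)
  exact (MeasurableEquiv.mk ((T ^ k : Equiv.Perm X) : X ≃ X)
    (measurable_perm_zpow T hT hT' k) h2).measurableEmbedding

end infra

lemma movAvg_pointwise {X : Type*} (T : Equiv.Perm X) (f G : X → ℝ) (L : ℕ) (x : X) :
    |movAvg T f 0 L x| ≤
      (L : ℝ)⁻¹ * ∑ i ∈ Finset.range L, |f ((T ^ (1 + (i : ℤ))) x)
          - (G ((T ^ (1 + (i : ℤ))) x) - G (T ((T ^ (1 + (i : ℤ))) x)))|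
      + (L : ℝ)⁻¹ * |G (T x)| + (L : ℝ)⁻¹ * |G ((T ^ (1 + (L : ℤ))) x)| := by
  set h : ℕ → ℝ := fun i => G ((T ^ (1 + (i : ℤ))) x) with hh
  have hTstep : ∀ i : ℕ, G (T ((T ^ (1 + (i : ℤ))) x)) = h (i + 1) := by
    intro i
    rw [perm_apply_zpow]
    simp only [hh]
    have hcast : (1:ℤ) + (i:ℤ) + 1 = 1 + ((i+1 : ℕ) : ℤ) := by push_cast; ring
    rw [hcast]
  set A : ℝ := ∑ i ∈ Finset.range L,
      (f ((T ^ (1 + (i : ℤ))) x) - (G ((T ^ (1 + (i : ℤ))) x) - G (T ((T ^ (1 + (i : ℤ))) x))))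
    with hA
  have hsum : ∑ i ∈ Finset.range L, f ((T ^ ((0 : ℤ) + 1 + (i : ℤ))) x)
      = A + (h 0 - h L) := by
    rw [← Finset.sum_range_sub' h L, hA, ← Finset.sum_add_distrib]
    refine Finset.sum_congr rfl fun i _ => ?_
    rw [hTstep i]
    simp only [zero_add, hh]
    ring
  have h0 : h 0 = G (T x) := by
    simp only [hh, Nat.cast_zero, add_zero, zpow_one]
  have hmv : movAvg T f 0 L x = (L : ℝ)⁻¹ * (A + (h 0 - h L)) := by
    rw [movAvg, hsum]
  have habsA : |A| ≤ ∑ i ∈ Finset.range L, |f ((T ^ (1 + (i : ℤ))) x)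
      - (G ((T ^ (1 + (i : ℤ))) x) - G (T ((T ^ (1 + (i : ℤ))) x)))| := by
    rw [hA]; exact Finset.abs_sum_le_sum_abs _ _
  have htri : |A + (h 0 - h L)| ≤ |A| + |h 0| + |h L| := by
    calc |A + (h 0 - h L)| ≤ |A| + |h 0 - h L| := abs_add_le _ _
      _ ≤ |A| + (|h 0| + |h L|) := by gcongr; exact abs_sub _ _
      _ = |A| + |h 0| + |h L| := by ring
  have hLnn : (0:ℝ) ≤ (L : ℝ)⁻¹ := by positivity
  calc |movAvg T f 0 L x| = (L : ℝ)⁻¹ * |A + (h 0 - h L)| := by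
        rw [hmv, abs_mul, abs_of_nonneg hLnn]
    _ ≤ (L : ℝ)⁻¹ * (|A| + |h 0| + |h L|) := by
        exact mul_le_mul_of_nonneg_left htri hLnn
    _ ≤ (L : ℝ)⁻¹ * ((∑ i ∈ Finset.range L, |f ((T ^ (1 + (i : ℤ))) x)
          - (G ((T ^ (1 + (i : ℤ))) x) - G (T ((T ^ (1 + (i : ℤ))) x)))|) + |h 0| + |h L|) := by
        gcongr
    _ = _ := by rw [h0]; simp only [hh]; ring

lemma keyLemma {X : Type*} [MeasurableSpace X] (μ : Measure X) [IsProbabilityMeasure μ]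
    (T : Equiv.Perm X) (hT : Measurable (⇑T)) (hT' : Measurable (⇑T.symm))
    (hP : MeasurePreserving (⇑T) μ μ)
    (f : X → ℝ) (hf : Integrable f μ)
    (g : ℕ → X → ℝ) (hg : ∀ n, MemLp (g n) 2 μ)
    (happrox : Summable (fun n : ℕ => ∫ x, |f x - (g n x - g n (T x))| ∂μ))
    (hgrowth : Summable (fun n : ℕ => (∫ x, (g n x) ^ 2 ∂μ) / ((n : ℝ) + 1) ^ 2))
    (δ : ℝ) (hδ : 0 < δ) :
    (∑' n : ℕ, μ {x | δ ≤ |movAvg T f 0 (n + 1) x|}) < ⊤ := by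
  have hPk := measurePreserving_perm_zpow T hT hT' hP
  have hEk := measurableEmbedding_perm_zpow T hT hT'
  have hQk : ∀ k : ℤ, Measure.QuasiMeasurePreserving (⇑(T ^ k)) μ μ :=
    fun k => (hPk k).quasiMeasurePreserving
  set r : ℕ → X → ℝ := fun n x => f x - (g n x - g n (T x)) with hrdef
  have hgT : ∀ n, MemLp (fun x => g n (T x)) 2 μ := fun n => (hg n).comp_measurePreserving hP
  have hrint : ∀ n, Integrable (r n) μ :=
    fun n => hf.sub (((hg n).integrable one_le_two).sub ((hgT n).integrable one_le_two))
  have hraem : ∀ n, AEMeasurable (r n) μ := fun n => (hrint n).aemeasurable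
  have hgaem : ∀ n, AEMeasurable (g n) μ := fun n => (hg n).aestronglyMeasurable.aemeasurable
  set I : ℕ → ℝ≥0∞ := fun n => ∫⁻ x, ENNReal.ofReal |r n x| ∂μ with hIdef
  set J : ℕ → ℝ≥0∞ := fun n =>
    ENNReal.ofReal ((∫ x, (g n x) ^ 2 ∂μ) / ((n : ℝ) + 1) ^ 2) with hJdef
  set c1 : ℝ≥0∞ := (ENNReal.ofReal (δ / 3))⁻¹ with hc1def
  set c2 : ℝ≥0∞ := (ENNReal.ofReal ((δ / 3) ^ 2))⁻¹ with hc2def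
  have hδ3 : 0 < δ / 3 := by linarith
  have hc1ne : ENNReal.ofReal (δ / 3) ≠ 0 := (ENNReal.ofReal_pos.2 hδ3).ne'
  have hc2ne : ENNReal.ofReal ((δ / 3) ^ 2) ≠ 0 := (ENNReal.ofReal_pos.2 (by positivity)).ne'
  have hc1top : c1 ≠ ⊤ := ENNReal.inv_ne_top.2 hc1ne
  have hc2top : c2 ≠ ⊤ := ENNReal.inv_ne_top.2 hc2ne
  -- the main per-n estimate
  have hmain : ∀ n : ℕ, μ {x | δ ≤ |movAvg T f 0 (n + 1) x|} ≤ I n * c1 + (J n * c2 + J n * c2) := by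
    intro n
    set L : ℕ := n + 1 with hLdef
    have hLpos : (0:ℝ) < (L : ℝ) := by positivity
    have hLcast : (L : ℝ) = (n : ℝ) + 1 := by rw [hLdef]; push_cast; ring
    set S1 : X → ℝ := fun x => (L : ℝ)⁻¹ * ∑ i ∈ Finset.range L,
        |r n ((T ^ (1 + (i : ℤ))) x)| with hS1def
    set S2 : X → ℝ := fun x => (L : ℝ)⁻¹ * |g n (T x)| with hS2def
    set S3 : X → ℝ := fun x => (L : ℝ)⁻¹ * |g n ((T ^ (1 + (L : ℤ))) x)| with hS3def
    have hptw : ∀ x, |movAvg T f 0 L x| ≤ S1 x + S2 x + S3 x := by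
      intro x
      have h := movAvg_pointwise T f (g n) L x
      simp only [hS1def, hS2def, hS3def, hrdef]
      exact h
    have hsplit : {x | δ ≤ |movAvg T f 0 L x|} ⊆
        {x | δ / 3 ≤ S1 x} ∪ {x | δ / 3 ≤ S2 x} ∪ {x | δ / 3 ≤ S3 x} := by
      intro x hx
      simp only [Set.mem_setOf_eq] at hx
      by_contra hcon
      simp only [Set.mem_union, Set.mem_setOf_eq, not_or, not_le] at hcon
      have := hptw x
      linarith [hcon.1.1, hcon.1.2, hcon.2]
    -- bound for S1
    have hb1 : μ {x | δ / 3 ≤ S1 x} ≤ I n * c1 := by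
      have haemS : AEMeasurable (fun x => ENNReal.ofReal (S1 x)) μ := by
        apply AEMeasurable.ennreal_ofReal
        apply AEMeasurable.const_mul
        apply Finset.aemeasurable_fun_sum
        intro i _
        exact continuous_abs.measurable.comp_aemeasurable
          ((hraem n).comp_quasiMeasurePreserving (hQk (1 + (i : ℤ))))
      have hsub1 : {x | δ / 3 ≤ S1 x} ⊆
          {x | ENNReal.ofReal (δ / 3) ≤ ENNReal.ofReal (S1 x)} :=
        fun x hx => ENNReal.ofReal_le_ofReal hx
      have hlin : (∫⁻ x, ENNReal.ofReal (S1 x) ∂μ) = I n := by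
        have h1 : ∀ x, ENNReal.ofReal (S1 x) = ENNReal.ofReal ((L : ℝ)⁻¹) *
            ∑ i ∈ Finset.range L, ENNReal.ofReal |r n ((T ^ (1 + (i : ℤ))) x)| := by
          intro x
          simp only [hS1def]
          rw [ENNReal.ofReal_mul (by positivity),
            ENNReal.ofReal_sum_of_nonneg (fun i _ => abs_nonneg _)]
        simp_rw [h1]
        have hmeas : ∀ i : ℕ,
            AEMeasurable (fun x => ENNReal.ofReal |r n ((T ^ (1 + (i : ℤ))) x)|) μ := by
          intro i
          exact (continuous_abs.measurable.comp_aemeasurable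
            ((hraem n).comp_quasiMeasurePreserving (hQk (1 + (i : ℤ))))).ennreal_ofReal
        rw [lintegral_const_mul' _ _ ENNReal.ofReal_ne_top,
          lintegral_finset_sum' _ (fun i _ => hmeas i)]
        have h2 : ∀ i ∈ Finset.range L,
            (∫⁻ x, ENNReal.ofReal |r n ((T ^ (1 + (i : ℤ))) x)| ∂μ) = I n :=
          fun i _ => (hPk (1 + (i : ℤ))).lintegral_comp_emb (hEk (1 + (i : ℤ)))
            (fun y => ENNReal.ofReal |r n y|)
        rw [Finset.sum_congr rfl h2, Finset.sum_const, Finset.card_range, nsmul_eq_mul,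
          ← mul_assoc]
        have h3 : ENNReal.ofReal ((L : ℝ)⁻¹) * (L : ℝ≥0∞) = 1 := by
          rw [← ENNReal.ofReal_natCast L, ← ENNReal.ofReal_mul (by positivity),
            inv_mul_cancel₀ (ne_of_gt hLpos), ENNReal.ofReal_one]
        rw [h3, one_mul]
      calc μ {x | δ / 3 ≤ S1 x}
          ≤ μ {x | ENNReal.ofReal (δ / 3) ≤ ENNReal.ofReal (S1 x)} := measure_mono hsub1
        _ ≤ (∫⁻ x, ENNReal.ofReal (S1 x) ∂μ) / ENNReal.ofReal (δ / 3) :=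
            meas_ge_le_lintegral_div haemS hc1ne ENNReal.ofReal_ne_top
        _ = I n * c1 := by rw [hlin, div_eq_mul_inv]
    have hb2 : μ {x | δ / 3 ≤ S2 x} ≤ J n * c2 := by
      have haemS : AEMeasurable (fun x => ENNReal.ofReal ((S2 x) ^ 2)) μ := by
        apply AEMeasurable.ennreal_ofReal
        apply AEMeasurable.pow_const
        apply AEMeasurable.const_mul
        exact continuous_abs.measurable.comp_aemeasurable
          ((hgaem n).comp_quasiMeasurePreserving hP.quasiMeasurePreserving)
      have hsub2 : {x | δ / 3 ≤ S2 x} ⊆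
          {x | ENNReal.ofReal ((δ / 3) ^ 2) ≤ ENNReal.ofReal ((S2 x) ^ 2)} := by
        intro x hx
        exact ENNReal.ofReal_le_ofReal (pow_le_pow_left₀ hδ3.le hx 2)
      have hlin : (∫⁻ x, ENNReal.ofReal ((S2 x) ^ 2) ∂μ) = J n := by
        have h1 : ∀ x, ENNReal.ofReal ((S2 x) ^ 2) = ENNReal.ofReal (((L : ℝ)⁻¹) ^ 2) *
            ENNReal.ofReal ((g n (T x)) ^ 2) := by
          intro x
          rw [← ENNReal.ofReal_mul (by positivity)]
          congr 1
          simp only [hS2def]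
          rw [mul_pow, sq_abs]
        simp_rw [h1]
        rw [lintegral_const_mul' _ _ ENNReal.ofReal_ne_top]
        have hTemb : MeasurableEmbedding (⇑T) := by
          have := hEk 1; rwa [zpow_one] at this
        have hcomp : (∫⁻ x, ENNReal.ofReal ((g n (T x)) ^ 2) ∂μ)
            = ∫⁻ y, ENNReal.ofReal ((g n y) ^ 2) ∂μ :=
          hP.lintegral_comp_emb hTemb (fun y => ENNReal.ofReal ((g n y) ^ 2))
        rw [hcomp, ← ofReal_integral_eq_lintegral_ofReal (hg n).integrable_sq
          (Eventually.of_forall fun x => sq_nonneg _),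
          ← ENNReal.ofReal_mul (by positivity), hJdef]
        congr 1
        rw [hLcast]
        field_simp
      calc μ {x | δ / 3 ≤ S2 x}
          ≤ μ {x | ENNReal.ofReal ((δ / 3) ^ 2) ≤ ENNReal.ofReal ((S2 x) ^ 2)} :=
            measure_mono hsub2
        _ ≤ (∫⁻ x, ENNReal.ofReal ((S2 x) ^ 2) ∂μ) / ENNReal.ofReal ((δ / 3) ^ 2) :=
            meas_ge_le_lintegral_div haemS hc2ne ENNReal.ofReal_ne_top
        _ = J n * c2 := by rw [hlin, div_eq_mul_inv]
    have hb3 : μ {x | δ / 3 ≤ S3 x} ≤ J n * c2 := by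
      have haemS : AEMeasurable (fun x => ENNReal.ofReal ((S3 x) ^ 2)) μ := by
        apply AEMeasurable.ennreal_ofReal
        apply AEMeasurable.pow_const
        apply AEMeasurable.const_mul
        exact continuous_abs.measurable.comp_aemeasurable
          ((hgaem n).comp_quasiMeasurePreserving (hQk (1 + (L : ℤ))))
      have hsub3 : {x | δ / 3 ≤ S3 x} ⊆
          {x | ENNReal.ofReal ((δ / 3) ^ 2) ≤ ENNReal.ofReal ((S3 x) ^ 2)} := by
        intro x hx
        exact ENNReal.ofReal_le_ofReal (pow_le_pow_left₀ hδ3.le hx 2)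
      have hlin : (∫⁻ x, ENNReal.ofReal ((S3 x) ^ 2) ∂μ) = J n := by
        have h1 : ∀ x, ENNReal.ofReal ((S3 x) ^ 2) = ENNReal.ofReal (((L : ℝ)⁻¹) ^ 2) *
            ENNReal.ofReal ((g n ((T ^ (1 + (L : ℤ))) x)) ^ 2) := by
          intro x
          rw [← ENNReal.ofReal_mul (by positivity)]
          congr 1
          simp only [hS3def]
          rw [mul_pow, sq_abs]
        simp_rw [h1]
        rw [lintegral_const_mul' _ _ ENNReal.ofReal_ne_top]
        have hcomp : (∫⁻ x, ENNReal.ofReal ((g n ((T ^ (1 + (L : ℤ))) x)) ^ 2) ∂μ)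
            = ∫⁻ y, ENNReal.ofReal ((g n y) ^ 2) ∂μ :=
          (hPk (1 + (L : ℤ))).lintegral_comp_emb (hEk (1 + (L : ℤ)))
            (fun y => ENNReal.ofReal ((g n y) ^ 2))
        rw [hcomp, ← ofReal_integral_eq_lintegral_ofReal (hg n).integrable_sq
          (Eventually.of_forall fun x => sq_nonneg _),
          ← ENNReal.ofReal_mul (by positivity), hJdef]
        congr 1
        rw [hLcast]
        field_simp
      calc μ {x | δ / 3 ≤ S3 x}
          ≤ μ {x | ENNReal.ofReal ((δ / 3) ^ 2) ≤ ENNReal.ofReal ((S3 x) ^ 2)} :=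
            measure_mono hsub3
        _ ≤ (∫⁻ x, ENNReal.ofReal ((S3 x) ^ 2) ∂μ) / ENNReal.ofReal ((δ / 3) ^ 2) :=
            meas_ge_le_lintegral_div haemS hc2ne ENNReal.ofReal_ne_top
        _ = J n * c2 := by rw [hlin, div_eq_mul_inv]
    calc μ {x | δ ≤ |movAvg T f 0 L x|}
        ≤ μ ({x | δ / 3 ≤ S1 x} ∪ {x | δ / 3 ≤ S2 x} ∪ {x | δ / 3 ≤ S3 x}) := measure_mono hsplit
      _ ≤ μ ({x | δ / 3 ≤ S1 x} ∪ {x | δ / 3 ≤ S2 x}) + μ {x | δ / 3 ≤ S3 x} := measure_union_le _ _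
      _ ≤ μ {x | δ / 3 ≤ S1 x} + μ {x | δ / 3 ≤ S2 x} + μ {x | δ / 3 ≤ S3 x} := by
          gcongr; exact measure_union_le _ _
      _ ≤ I n * c1 + J n * c2 + J n * c2 := by gcongr
      _ = I n * c1 + (J n * c2 + J n * c2) := by ring
  -- summability
  have hIsum : (∑' n, I n) ≠ ⊤ := by
    have heq : ∀ n, I n = ENNReal.ofReal (∫ x, |r n x| ∂μ) := fun n =>
      (ofReal_integral_eq_lintegral_ofReal (hrint n).abs
        (Eventually.of_forall fun x => abs_nonneg _)).symm
    rw [tsum_congr heq, ← ENNReal.ofReal_tsum_of_nonneg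
      (fun n => integral_nonneg fun x => abs_nonneg _) happrox]
    exact ENNReal.ofReal_ne_top
  have hJsum : (∑' n, J n) ≠ ⊤ := by
    rw [hJdef, ← ENNReal.ofReal_tsum_of_nonneg
      (fun n => div_nonneg (integral_nonneg fun x => sq_nonneg _) (by positivity)) hgrowth]
    exact ENNReal.ofReal_ne_top
  calc (∑' n : ℕ, μ {x | δ ≤ |movAvg T f 0 (n + 1) x|})
      ≤ ∑' n, (I n * c1 + (J n * c2 + J n * c2)) := ENNReal.tsum_le_tsum hmain
    _ = (∑' n, I n) * c1 + ((∑' n, J n) * c2 + (∑' n, J n) * c2) := by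
        rw [ENNReal.tsum_add]
        congr 1
        · exact ENNReal.tsum_mul_right
        · rw [ENNReal.tsum_add]; congr 1 <;> exact ENNReal.tsum_mul_right
    _ < ⊤ := by
        have h1 : (∑' n, I n) * c1 < ⊤ := ENNReal.mul_lt_top hIsum.lt_top hc1top.lt_top
        have h2 : (∑' n, J n) * c2 < ⊤ := ENNReal.mul_lt_top hJsum.lt_top hc2top.lt_top
        exact ENNReal.add_lt_top.2 ⟨h1, ENNReal.add_lt_top.2 ⟨h2, h2⟩⟩

/-- Suppose `f ∈ L¹(μ)` is approximated by coboundaries `g_n - g_n∘T` with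
`∑_n ‖f - (g_n - g_n∘T)‖₁ < ∞` and `∑_n ‖g_n‖₂²/n² < ∞` (indices `n ≥ 1`). Then the
ergodic averages `A_n^T f = M(0,n)^T f` converge completely to `0`, and consequently every
moving average `M(v_n, L_n)^T f` with `(L_n)` strictly increasing positive converges a.e.
to `0`. -/
theorem stmt13
    {X : Type*} [MeasurableSpace X] (μ : Measure X) [IsProbabilityMeasure μ]
    (T : Equiv.Perm X) (hT : Measurable (⇑T)) (hT' : Measurable (⇑T.symm))
    (hTerg : Ergodic (⇑T) μ)
    (f : X → ℝ) (hf : Integrable f μ)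
    (g : ℕ → X → ℝ) (hg : ∀ n, MemLp (g n) 2 μ)
    (happrox : Summable (fun n : ℕ => ∫ x, |f x - (g n x - g n (T x))| ∂μ))
    (hgrowth : Summable (fun n : ℕ => (∫ x, (g n x) ^ 2 ∂μ) / ((n : ℝ) + 1) ^ 2)) :
    (∀ δ : ℝ, 0 < δ →
      (∑' n : ℕ, μ {x | δ ≤ |movAvg T f 0 (n + 1) x|}) < ⊤) ∧
    (∀ (v : ℕ → ℤ) (L : ℕ → ℕ), (∀ n, 0 < L n) → StrictMono L →
      ∀ᵐ x ∂μ, Tendsto (fun n => movAvg T f (v n) (L n) x) atTop (nhds 0)) := by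

  have hP : MeasurePreserving (⇑T) μ μ := hTerg.toMeasurePreserving
  have hPk := measurePreserving_perm_zpow T hT hT' hP
  have hEk := measurableEmbedding_perm_zpow T hT hT'
  have H1 : ∀ δ : ℝ, 0 < δ → (∑' n : ℕ, μ {x | δ ≤ |movAvg T f 0 (n + 1) x|}) < ⊤ :=
    fun δ hδ => keyLemma μ T hT hT' hP f hf g hg happrox hgrowth δ hδ
  refine ⟨H1, ?_⟩
  intro v L hLpos hLmono
  have hLn : ∀ n, L n - 1 + 1 = L n := fun n => Nat.succ_pred_eq_of_pos (hLpos n)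
  have hshift : ∀ (n : ℕ) (δ : ℝ), μ {x | δ ≤ |movAvg T f (v n) (L n) x|}
      = μ {x | δ ≤ |movAvg T f 0 (L n) x|} := by
    intro n δ
    have hset : {x | δ ≤ |movAvg T f (v n) (L n) x|}
        = ⇑(T ^ (v n)) ⁻¹' {x | δ ≤ |movAvg T f 0 (L n) x|} := by
      ext x
      simp only [Set.mem_preimage, Set.mem_setOf_eq]
      have hmv : movAvg T f 0 (L n) ((T ^ (v n)) x) = movAvg T f (v n) (L n) x := by
        unfold movAvg
        congr 1
        refine Finset.sum_congr rfl fun i _ => ?_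
        rw [perm_zpow_add_apply]
        have hexp : (0 : ℤ) + 1 + (i : ℤ) + v n = v n + 1 + (i : ℤ) := by ring
        rw [hexp]
      rw [hmv]
    rw [hset, MeasurePreserving.measure_preimage_emb (hPk (v n)) (hEk (v n))]
  have hinj : Function.Injective (fun n => L n - 1) := by
    have hmono : StrictMono (fun n => L n - 1) := by
      intro a b hab
      have h1 := hLmono hab
      have h2 := hLpos a
      show L a - 1 < L b - 1
      omega
    exact hmono.injective
  have hBC : ∀ δ : ℝ, 0 < δ → ∀ᵐ x ∂μ, ∀ᶠ n in atTop,
      ¬ (δ ≤ |movAvg T f (v n) (L n) x|) := by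
    intro δ hδ
    set a : ℕ → ℝ≥0∞ := fun m => μ {x | δ ≤ |movAvg T f 0 (m + 1) x|} with hadef
    have h1 : ∀ n, μ {x | δ ≤ |movAvg T f (v n) (L n) x|} = a (L n - 1) := by
      intro n
      rw [hshift n δ]
      show _ = μ {x | δ ≤ |movAvg T f 0 (L n - 1 + 1) x|}
      rw [hLn n]
    have hsum : (∑' n, μ {x | δ ≤ |movAvg T f (v n) (L n) x|}) ≠ ⊤ := by
      rw [tsum_congr h1]
      exact (lt_of_le_of_lt (ENNReal.tsum_comp_le_tsum_of_injective hinj a) (H1 δ hδ)).ne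
    have := ae_eventually_notMem hsum
    filter_upwards [this] with x hx
    exact hx.mono fun n hn => hn
  have hall : ∀ᵐ x ∂μ, ∀ k : ℕ, ∀ᶠ n in atTop,
      ¬ ((1 : ℝ) / ((k : ℝ) + 1) ≤ |movAvg T f (v n) (L n) x|) :=
    ae_all_iff.2 fun k => hBC (1 / ((k : ℝ) + 1)) (by positivity)
  filter_upwards [hall] with x hx
  rw [Metric.tendsto_atTop]
  intro ε hε
  obtain ⟨k, hk⟩ := exists_nat_one_div_lt hε
  obtain ⟨N, hN⟩ := eventually_atTop.1 (hx k)
  refine ⟨N, fun n hn => ?_⟩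
  have hlt : |movAvg T f (v n) (L n) x| < 1 / ((k : ℝ) + 1) := not_le.1 (hN n hn)
  rw [Real.dist_eq, sub_zero]
  linarith
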